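/- Let U be a subgroup of the unit circle {z ∈ ℂ : |z| = 1} with −1 ∈ U and with at least 6 elements. Then the product of any two monomials is a monomial: if m, m' ∈ M(U), then m·m' ∈ M(U). -/

import Mathlib

/-- The antisymmetric bracket `⟨x,y⟩ = x·conj(y) − conj(x)·y`. -/
noncomputable def sbr (x y : ℂ) : ℂ :=
  x * (starRingEnd ℂ) y - (starRingEnd ℂ) x * y

/-- The intersection point `I_{u,v}(p,q)` of the lines `L_u(p)` and `L_v(q)`. -/
noncomputable def Iop (u v p q : ℂ) : ℂ :=
  (sbr u p / sbr u v) * v + (sbr v q / sbr v u) * u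

/-- `origamiMon U` is the smallest subset of `ℂ` containing `1` that is closed under
`p ↦ I_{u,v}(p,0)` for all `u, v ∈ U` with `u ≠ ±v`.  Its elements are the monomials `M(U)`. -/
inductive origamiMon (U : Set ℂ) : ℂ → Prop
  | one : origamiMon U 1
  | step {u v : ℂ} (hu : u ∈ U) (hv : v ∈ U) (huv : u ≠ v) (huv' : u ≠ -v)
      {p : ℂ} (hp : origamiMon U p) : origamiMon U (Iop u v p 0)

/-- With target `0`, the intersection map simplifies to a single term. -/
lemma Iop0 (u v p : ℂ) : Iop u v p 0 = (sbr u p / sbr u v) * v := by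
  simp [Iop, sbr]

/-- The bracket is conjugate-antisymmetric. -/
lemma conj_sbr (x y : ℂ) : (starRingEnd ℂ) (sbr x y) = - sbr x y := by
  simp [sbr]

/-- Every monomial `m` satisfies `m = w² · conj m` for some `w ∈ U`. -/
lemma sqconj {U : Set ℂ} (hsub : ∀ z ∈ U, ‖z‖ = 1) (hone : (1:ℂ) ∈ U)
    {m : ℂ} (hm : origamiMon U m) :
    ∃ w ∈ U, m = w^2 * (starRingEnd ℂ) m := by
  induction hm with
  | one => exact ⟨1, hone, by simp⟩
  | @step u v hu hv huv huv' p hp ih =>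
    refine ⟨v, hv, ?_⟩
    have hvc : v * (starRingEnd ℂ) v = 1 := by
      rw [Complex.mul_conj, Complex.normSq_eq_norm_sq, hsub v hv]; norm_num
    rw [Iop0]
    rw [map_mul, map_div₀, conj_sbr, conj_sbr, neg_div_neg_eq]
    simp only [div_eq_mul_inv]
    linear_combination (-(sbr u p * (sbr u v)⁻¹ * v)) * hvc

/-- The key identity: multiplication by `m` with `conj m = (conj w)² m`, `|w| = 1`,
rotates the intersection construction. -/
lemma key {u v w m p : ℂ} (hw : w * (starRingEnd ℂ) w = 1)
    (hm : (starRingEnd ℂ) m = ((starRingEnd ℂ) w)^2 * m) :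
    m * Iop u v p 0 = Iop (u*w) (v*w) (m*p) 0 := by
  have hD : sbr (u*w) (v*w) = sbr u v := by
    simp only [sbr, map_mul]
    linear_combination (u * (starRingEnd ℂ) v - (starRingEnd ℂ) u * v) * hw
  have hS : sbr (u*w) (m*p) = (starRingEnd ℂ) w * m * sbr u p := by
    simp only [sbr, map_mul, hm]
    linear_combination (u * m * (starRingEnd ℂ) p * (starRingEnd ℂ) w) * hw
  rw [Iop0, Iop0, hD, hS]
  simp only [div_eq_mul_inv]
  linear_combination (-(m * sbr u p * (sbr u v)⁻¹ * v)) * hw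

/-- The product of two monomials is a monomial. -/
theorem stmt_9 (U : Set ℂ)
    (hsub : ∀ z ∈ U, ‖z‖ = 1)
    (hone : (1 : ℂ) ∈ U)
    (hmul : ∀ a ∈ U, ∀ b ∈ U, a * b ∈ U)
    (hinv : ∀ a ∈ U, a⁻¹ ∈ U)
    (hneg : (-1 : ℂ) ∈ U)
    (hcard : ∃ s : Finset ℂ, ↑s ⊆ U ∧ 6 ≤ s.card)
    {m m' : ℂ} (hm : origamiMon U m) (hm' : origamiMon U m') :
    origamiMon U (m * m') := by
  induction hm' with
  | one => simpa using hm
  | @step u v hu hv huv huv' p hp ih =>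
    obtain ⟨w, hwU, hwm⟩ := sqconj hsub hone hm
    have hwabs := hsub w hwU
    have hw : w * (starRingEnd ℂ) w = 1 := by
      rw [Complex.mul_conj, Complex.normSq_eq_norm_sq, hwabs]; norm_num
    have hw0 : w ≠ 0 := by
      intro h; rw [h] at hwabs; simp at hwabs
    have hmconj : (starRingEnd ℂ) m = ((starRingEnd ℂ) w)^2 * m := by
      have h := congrArg (starRingEnd ℂ) hwm
      simpa using h
    rw [key hw hmconj]
    refine origamiMon.step (hmul u hu w hwU) (hmul v hv w hwU) ?_ ?_ ih
    · intro h; exact huv (mul_right_cancel₀ hw0 h)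
    · intro h
      apply huv'
      have h2 : u * w = (-v) * w := by rw [h]; ring
      exact mul_right_cancel₀ hw0 h2
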